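/- Let $S_i$ and $S_j$ be two autonomous discrete-time linear systems with matrices $A_i, A_j \in \mathbb{R}^{n\times n}$, $C_i, C_j \in \mathbb{R}^{p\times n}$, with $n \geq 1$. If $2\sigma \geq p$, then $S_i$ and $S_j$ are not $\sigma$-securely distinguishable: there exist initial states $(x_{0i}, x_{0j}) \neq (0,0)$ and cyclic $\sigma$-sparse attack sequences $w_i, w_j : \mathbb{N} \to \mathbb{R}^p$ such that $C_i A_i^t x_{0i} + w_i(t) = C_j A_j^t x_{0j} + w_j(t)$ for all $t \in \mathbb{N}$. Consequently, $\sigma$-secure distinguishability requires $2\sigma < p$. -/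

import Mathlib

open Matrix

/-- A sequence `w : ℕ → ℝᵖ` is cyclic `σ`-sparse if there is a fixed index set `Γ` of
cardinality at most `σ` containing the support of `w t` for all `t`. -/
def CyclicSparse {p : ℕ} (σ : ℕ) (w : ℕ → Fin p → ℝ) : Prop :=
  ∃ Γ : Finset (Fin p), Γ.card ≤ σ ∧ ∀ t : ℕ, ∀ k ∉ Γ, w t k = 0

/-- If `2σ ≥ p` (and `n ≥ 1`), then two autonomous linear systems are
never `σ`-securely distinguishable: there are initial states not both zero and cyclic
`σ`-sparse sensor attacks making the corrupted outputs coincide at all times. Hence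
`σ`-secure distinguishability requires `2σ < p`. -/
theorem stmt_3 {n p : ℕ} (σ : ℕ) (hn : 1 ≤ n) (hσ : p ≤ 2 * σ)
    (Ai Aj : Matrix (Fin n) (Fin n) ℝ) (Ci Cj : Matrix (Fin p) (Fin n) ℝ) :
    ∃ (x0i x0j : Fin n → ℝ) (wi wj : ℕ → Fin p → ℝ),
      ¬(x0i = 0 ∧ x0j = 0) ∧ CyclicSparse σ wi ∧ CyclicSparse σ wj ∧
      ∀ t : ℕ,
        Ci.mulVec ((Ai ^ t).mulVec x0i) + wi t = Cj.mulVec ((Aj ^ t).mulVec x0j) + wj t := by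
  set x0i : Fin n → ℝ := Pi.single ⟨0, hn⟩ 1 with hx
  set y : ℕ → Fin p → ℝ := fun t => Ci.mulVec ((Ai ^ t).mulVec x0i) with hy
  set Γi : Finset (Fin p) := Finset.univ.filter (fun k => (k : ℕ) < σ) with hΓi
  refine ⟨x0i, 0, fun t k => if (k : ℕ) < σ then -(y t k) else 0,
      fun t k => if (k : ℕ) < σ then 0 else y t k, ?_, ?_, ?_, ?_⟩
  · rintro ⟨h1, -⟩
    have := congrFun h1 ⟨0, hn⟩
    simp [hx, Pi.single_eq_same] at this
  · refine ⟨Γi, ?_, ?_⟩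
    · calc Γi.card ≤ (Finset.range σ).card := by
            refine Finset.card_le_card_of_injOn (fun k => (k : ℕ)) ?_ ?_
            · intro k hk; simp [hΓi] at hk ⊢; exact hk
            · intro a _ b _ h; exact Fin.ext h
        _ = σ := Finset.card_range σ
    · intro t k hk
      simp only [hΓi, Finset.mem_filter, Finset.mem_univ, true_and, not_lt] at hk
      simp [Nat.not_lt.mpr hk]
  · refine ⟨Γiᶜ, ?_, ?_⟩
    · calc Γiᶜ.card ≤ (Finset.range (p - σ)).card := by
            refine Finset.card_le_card_of_injOn (fun k : Fin p => (k : ℕ) - σ) ?_ ?_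
            · intro k hk
              simp only [Finset.mem_compl, hΓi, Finset.mem_filter, Finset.mem_univ,
                true_and, not_lt] at hk
              simp only [Finset.mem_range]
              have := k.isLt; have hk' : σ ≤ (k:ℕ) := by simpa [hΓi] using hk
              rw [Finset.mem_coe, Finset.mem_range]
              omega
            · intro a ha b hb h
              have h' : (a:ℕ) - σ = (b:ℕ) - σ := by simpa using h
              have ha' : σ ≤ (a:ℕ) := by simpa [hΓi] using ha
              have hb' : σ ≤ (b:ℕ) := by simpa [hΓi] using hb
              exact Fin.ext (by omega)
        _ = p - σ := Finset.card_range _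
        _ ≤ σ := by omega
    · intro t k hk
      simp only [Finset.mem_compl, hΓi, Finset.mem_filter, Finset.mem_univ, true_and,
        not_not] at hk
      simp [hk]
  · intro t
    funext k
    by_cases h : (k : ℕ) < σ <;> simp [hy, h, Matrix.mulVec_zero]
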